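/- Fix τ > 2, σ ≥ 0, α > 1. With ζ_ll := 2−α, ζ_hl := (τ−1)/α−(τ−2), ζ_hh as in the high-high exponent definition, ξ_⋆ := max(0, α−(τ−1), (σ+1)α−2(τ−1)), and γ_long := (α−1)/(ξ_⋆+τ−1): if max(ζ_ll, ζ_hl, ζ_hh) < 0, then 1 − γ_long(τ−1) < 0. -/

import Mathlib

open Classical in
/-- If `max(ζ_ll, ζ_hl, ζ_hh) < 0` then `1 − γ_long(τ−1) < 0`. -/
theorem gamma_long_neg (τ σ α : ℝ) (hτ : 2 < τ) (hσ : 0 ≤ σ) (hα : 1 < α) :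
    let γhh : ℝ := if τ ≤ σ + 2 then (α - 1) / ((σ + 1) * α - (τ - 1)) else 1 / (σ + 1)
    let ζll : ℝ := 2 - α
    let ζhl : ℝ := (τ - 1) / α - (τ - 2)
    let ζhh : ℝ := 1 - γhh * (τ - 1)
    let ξs : ℝ := max 0 (max (α - (τ - 1)) ((σ + 1) * α - 2 * (τ - 1)))
    let γlong : ℝ := (α - 1) / (ξs + τ - 1)
    max ζll (max ζhl ζhh) < 0 →
      1 - γlong * (τ - 1) < 0 := by
  intro γhh ζll ζhl ζhh ξs γlong h
  have hll : ζll < 0 := lt_of_le_of_lt (le_max_left _ _) h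
  have hhl : ζhl < 0 := lt_of_le_of_lt (le_trans (le_max_left _ _) (le_max_right _ _)) h
  have hhh : ζhh < 0 := lt_of_le_of_lt (le_trans (le_max_right _ _) (le_max_right _ _)) h
  have hα2 : 2 < α := by simp only [ζll] at hll; linarith
  have hαpos : (0:ℝ) < α := by linarith
  have hhl' : τ - 1 < α * (τ - 2) := by
    have : (τ - 1) / α < τ - 2 := by simp only [ζhl] at hhl; linarith
    nlinarith [(div_lt_iff₀ hαpos).mp this]
  have key3 : (σ + 1) * α - (τ - 1) < (α - 1) * (τ - 1) := by
    by_cases hc : τ ≤ σ + 2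
    · set D : ℝ := (σ + 1) * α - (τ - 1) with hD
      have hγ : γhh = (α - 1) / D := by simp [γhh, hc, hD]
      have hDpos : 0 < D := by
        rcases lt_trichotomy D 0 with h1 | h1 | h1
        · exfalso
          have : (α - 1) / D < 0 := div_neg_of_pos_of_neg (by linarith) h1
          have : γhh * (τ - 1) < 0 := by
            rw [hγ]; exact mul_neg_of_neg_of_pos this (by linarith)
          simp only [ζhh] at hhh; linarith
        · exfalso
          simp only [ζhh, hγ, h1, div_zero, zero_mul] at hhh; linarith
        · exact h1
      have : 1 < (α - 1) / D * (τ - 1) := by simp only [ζhh, hγ] at hhh; linarith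
      have := (lt_div_iff₀ hDpos).mp (by rw [div_mul_eq_mul_div] at this; exact this)
      linarith
    · have hγ : γhh = 1 / (σ + 1) := by simp [γhh, hc]
      have hσ1 : (0:ℝ) < σ + 1 := by linarith
      have : 1 < 1 / (σ + 1) * (τ - 1) := by simp only [ζhh, hγ] at hhh; linarith
      have h2 : σ + 1 < τ - 1 := by
        have := (lt_div_iff₀ hσ1).mp (by rw [div_mul_eq_mul_div] at this; exact this)
        linarith
      nlinarith
  have hξ : ξs < (α - 1) * (τ - 1) - (τ - 1) := by
    apply max_lt
    · nlinarith
    apply max_lt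
    · linarith
    · linarith
  have hden : 0 < ξs + τ - 1 := by
    have : (0:ℝ) ≤ ξs := le_max_left _ _
    linarith
  have : 1 < (α - 1) * (τ - 1) / (ξs + τ - 1) := by
    rw [lt_div_iff₀ hden]; linarith
  simp only [γlong]
  rw [div_mul_eq_mul_div]
  linarith
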